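/- Let n ≥ 3, let 1 < p < ∞ with 1/p + 1/q = 1, and let γ > −(n−1)(p−1). Let μ be a positive Borel measure on the upper half-space H with ∫_H y_n^p/(1+|y|)^γ dμ(y) < ∞ and ∫_H 1/(1+|y|)^{n−1} dμ(y) < ∞. For x ∈ H define h_1(x) = ∫_{{y ∈ H : 1 < |y| ≤ |x|/2}} G(x,y) dμ(y). Then h_1(x) = o( x_n |x|^{γ/p + (n−1)/q − n} ) as |x| → ∞, x ∈ H. -/

import Mathlib

open MeasureTheory Filter Metric Asymptotics ENNReal

/-- The last coordinate `x_n` of a point `x ∈ ℝⁿ`. -/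
noncomputable def lastCoord {n : ℕ} (x : EuclideanSpace ℝ (Fin n)) : ℝ :=
  if h : 0 < n then x ⟨n - 1, Nat.sub_lt h one_pos⟩ else 0

/-- The upper half-space `H = {x ∈ ℝⁿ : x_n > 0}`. -/
def upperHalfSpace (n : ℕ) : Set (EuclideanSpace ℝ (Fin n)) :=
  {x | 0 < lastCoord x}

/-- `ω_n = 2 π^{n/2} / Γ(n/2)`, the surface area of the unit sphere in ℝⁿ. -/
noncomputable def surfaceArea (n : ℕ) : ℝ :=
  2 * Real.pi ^ ((n : ℝ) / 2) / Real.Gamma ((n : ℝ) / 2)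

/-- The embedding `y' ↦ (y', 0)` of `ℝ^{n-1}` into `ℝⁿ`. -/
noncomputable def extendBdry {n : ℕ} (y' : EuclideanSpace ℝ (Fin (n - 1))) :
    EuclideanSpace ℝ (Fin n) :=
  (EuclideanSpace.equiv (Fin n) ℝ).symm
    (fun i => if h : (i : ℕ) < n - 1 then y' ⟨(i : ℕ), h⟩ else 0)

/-- The Poisson kernel `P(x, y') = 2 x_n / (ω_n |x - (y',0)|^n)` of the half-space. -/
noncomputable def halfSpacePoissonKernel (n : ℕ) (x : EuclideanSpace ℝ (Fin n))
    (y' : EuclideanSpace ℝ (Fin (n - 1))) : ℝ :=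
  2 * lastCoord x / (surfaceArea n * ‖x - extendBdry y'‖ ^ n)

/-- The Poisson integral `v(x) = ∫_{ℝ^{n-1}} P(x,y') f(y') dy'`. -/
noncomputable def poissonIntegral (n : ℕ) (f : EuclideanSpace ℝ (Fin (n - 1)) → ℝ)
    (x : EuclideanSpace ℝ (Fin n)) : ℝ :=
  ∫ y', halfSpacePoissonKernel n x y' * f y'

/-- The reflection `y* = (y', -y_n)` of `y` in the boundary hyperplane. -/
noncomputable def reflectPt {n : ℕ} (y : EuclideanSpace ℝ (Fin n)) :
    EuclideanSpace ℝ (Fin n) :=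
  (EuclideanSpace.equiv (Fin n) ℝ).symm
    (fun i => if (i : ℕ) = n - 1 then -(y i) else y i)

/-- The Green function `G(x,y) = r_n (|x - y*|^{2-n} - |x - y|^{2-n})` of the
half-space, where `r_n = 1/((n-2) ω_n)`. -/
noncomputable def greenFn (n : ℕ) (x y : EuclideanSpace ℝ (Fin n)) : ℝ :=
  (1 / (((n : ℝ) - 2) * surfaceArea n)) *
    (‖x - reflectPt y‖ ^ ((2 : ℝ) - n) - ‖x - y‖ ^ ((2 : ℝ) - n))

/-- The Green potential `h(x) = ∫_H G(x,y) dμ(y)`. -/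
noncomputable def greenPotential (n : ℕ) (μ : Measure (EuclideanSpace ℝ (Fin n)))
    (x : EuclideanSpace ℝ (Fin n)) : ℝ :=
  ∫ y in upperHalfSpace n, greenFn n x y ∂μ

/-- The maximal function of order `β` of a Borel measure `μ`:
`M(dμ)(x) = sup_{0<r<∞} μ(B(x,r))/r^β`. -/
noncomputable def maxFn {n : ℕ} (μ : Measure (EuclideanSpace ℝ (Fin n))) (β : ℝ)
    (x : EuclideanSpace ℝ (Fin n)) : ℝ≥0∞ :=
  ⨆ (r : ℝ) (_ : 0 < r), μ (Metric.ball x r) / ENNReal.ofReal (r ^ β)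

/-! ### Auxiliary lemmas -/

lemma surfaceArea_pos' {n : ℕ} (hn : 0 < n) : 0 < surfaceArea n := by
  have h1 : (0:ℝ) < (n:ℝ)/2 := by positivity
  have := Real.Gamma_pos_of_pos h1
  have := Real.rpow_pos_of_pos Real.pi_pos ((n:ℝ)/2)
  unfold surfaceArea; positivity

lemma lastCoord_measurable' (n : ℕ) : Measurable (lastCoord (n := n)) := by
  by_cases h : 0 < n
  · have : (lastCoord (n := n)) = fun x => x ⟨n-1, Nat.sub_lt h one_pos⟩ := by
      funext x; simp [lastCoord, h]
    rw [this]
    exact (EuclideanSpace.proj (⟨n-1, Nat.sub_lt h one_pos⟩ : Fin n)).continuous.measurable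
  · have : (lastCoord (n := n)) = fun _ => (0:ℝ) := by funext x; simp [lastCoord, h]
    rw [this]; exact measurable_const

lemma upperHalfSpace_measurable' (n : ℕ) : MeasurableSet (upperHalfSpace n) :=
  lastCoord_measurable' n measurableSet_Ioi

lemma norm_sq_eq' {n : ℕ} (x : EuclideanSpace ℝ (Fin n)) : ‖x‖ ^ 2 = ∑ i, (x i)^2 := by
  rw [EuclideanSpace.norm_eq, Real.sq_sqrt (by positivity)]
  simp [sq_abs]

lemma abs_coord_le_norm' {n : ℕ} (x : EuclideanSpace ℝ (Fin n)) (i : Fin n) : |x i| ≤ ‖x‖ := by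
  have h := EuclideanSpace.norm_eq x
  nlinarith [Real.sq_sqrt (show (0:ℝ) ≤ ∑ i, ‖x i‖^2 by positivity),
    Finset.single_le_sum (f := fun j => ‖x j‖^2) (fun j _ => by positivity) (Finset.mem_univ i),
    norm_nonneg x, abs_nonneg (x i), Real.norm_eq_abs (x i)]

lemma lastCoord_le_norm' {n : ℕ} (x : EuclideanSpace ℝ (Fin n)) : lastCoord x ≤ ‖x‖ := by
  by_cases h : 0 < n
  · have : lastCoord x = x ⟨n-1, Nat.sub_lt h one_pos⟩ := by simp [lastCoord, h]
    rw [this]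
    exact le_trans (le_abs_self _) (abs_coord_le_norm' x _)
  · simp [lastCoord, h]

lemma reflect_sq' {n : ℕ} (hn : 0 < n) (x y : EuclideanSpace ℝ (Fin n)) :
    ‖x - reflectPt y‖ ^ 2 = ‖x - y‖ ^ 2 + 4 * lastCoord x * lastCoord y := by
  set l : Fin n := ⟨n - 1, Nat.sub_lt hn one_pos⟩ with hl
  have hrefl : ∀ i : Fin n, reflectPt y i = if (i : ℕ) = n - 1 then -(y i) else y i :=
    fun _ => rfl
  have hx : lastCoord x = x l := by simp [lastCoord, hn, hl]
  have hy : lastCoord y = y l := by simp [lastCoord, hn, hl]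
  rw [norm_sq_eq', norm_sq_eq', hx, hy]
  have key : ∀ z : EuclideanSpace ℝ (Fin n),
      ∑ i, ((x - z) i)^2 = ((x - z) l)^2 + ∑ i ∈ Finset.univ.erase l, ((x - z) i)^2 :=
    fun z => (Finset.add_sum_erase Finset.univ _ (Finset.mem_univ l)).symm
  rw [key, key]
  have h2 : ∑ i ∈ Finset.univ.erase l, ((x - reflectPt y) i)^2
      = ∑ i ∈ Finset.univ.erase l, ((x - y) i)^2 := by
    refine Finset.sum_congr rfl fun i hi => ?_
    have hil : i ≠ l := (Finset.mem_erase.1 hi).1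
    have : (i : ℕ) ≠ n - 1 := fun h => hil (Fin.ext h)
    show (x i - reflectPt y i)^2 = (x i - y i)^2
    rw [hrefl, if_neg this]
  rw [h2]
  have hll : (l : ℕ) = n - 1 := rfl
  have : (x - reflectPt y) l = x l + y l := by
    show x l - reflectPt y l = _
    rw [hrefl, if_pos hll]; ring
  rw [this]
  show (x l + y l)^2 + _ = (x l - y l)^2 + _ + _
  ring

lemma key_ineq' (m : ℕ) (t s : ℝ) (ht : 0 < t) (hts : t ≤ s) :
    t ^ (-(m:ℝ)) - s ^ (-(m:ℝ)) ≤ m * (s - t) / t ^ (m + 1) := by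
  have hs : 0 < s := lt_of_lt_of_le ht hts
  have hb : (1:ℝ) + m * (t/s - 1) ≤ (1 + (t/s - 1)) ^ m := by
    apply one_add_mul_le_pow
    have : 0 < t / s := by positivity
    linarith
  have hts' : (1:ℝ) + (t/s - 1) = t/s := by ring
  rw [hts', div_pow] at hb
  rw [Real.rpow_neg ht.le, Real.rpow_neg hs.le, Real.rpow_natCast, Real.rpow_natCast]
  have htm : 0 < t ^ m := by positivity
  have hsm : 0 < s ^ m := by positivity
  have hab : t ^ m ≤ s ^ m := pow_le_pow_left₀ ht.le hts m
  have hb2 : (s + m*(t-s)) * s ^ m ≤ t ^ m * s := by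
    have := mul_le_mul_of_nonneg_right hb hsm.le
    have hs0 : s ≠ 0 := hs.ne'
    calc (s + m*(t-s)) * s ^ m = ((1 + m * (t/s - 1)) * s) * s ^ m := by field_simp
    _ = ((1 + m * (t/s - 1)) * s ^ m) * s := by ring
    _ ≤ (t ^ m / s ^ m * s ^ m) * s := by nlinarith
    _ = t ^ m * s := by field_simp
  have h3 : (s ^ m - t ^ m) * t ≤ (m * (s - t)) * s ^ m := by nlinarith
  rw [inv_sub_inv htm.ne' hsm.ne', pow_succ, div_le_div_iff₀ (by positivity) (by positivity)]
  nlinarith [mul_le_mul_of_nonneg_right h3 htm.le]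

lemma green_bound' {n : ℕ} (hn : 3 ≤ n) (x y : EuclideanSpace ℝ (Fin n))
    (hx : 0 < lastCoord x) (hy : 0 < lastCoord y) (ht : 0 < ‖x - y‖) :
    |greenFn n x y| ≤ 2 / surfaceArea n * (lastCoord x * lastCoord y) / ‖x - y‖ ^ n := by
  have hn0 : 0 < n := by omega
  have hω := surfaceArea_pos' hn0
  set ω := surfaceArea n
  set t := ‖x - y‖
  set s := ‖x - reflectPt y‖
  have hs2 : s ^ 2 = t ^ 2 + 4 * lastCoord x * lastCoord y := reflect_sq' hn0 x y
  have hsn : 0 ≤ s := norm_nonneg _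
  have hts : t ≤ s := by nlinarith [mul_pos hx hy]
  have hs : 0 < s := lt_of_lt_of_le ht hts
  set m : ℕ := n - 2 with hmdef
  have hm : (m:ℝ) = (n:ℝ) - 2 := by
    have h2 : (2:ℕ) ≤ n := by omega
    rw [hmdef, Nat.cast_sub h2, Nat.cast_ofNat]
  have hexp : (2:ℝ) - n = -(m:ℝ) := by rw [hm]; ring
  have hn3 : (3:ℝ) ≤ (n:ℝ) := by exact_mod_cast hn
  have hr : (0:ℝ) < ((n:ℝ) - 2) * ω := by nlinarith
  have hst : s ^ ((2:ℝ) - n) ≤ t ^ ((2:ℝ) - n) :=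
    Real.rpow_le_rpow_of_nonpos ht hts (by linarith)
  have habs : |greenFn n x y| =
      (1 / (((n:ℝ) - 2) * ω)) * (t ^ ((2:ℝ) - n) - s ^ ((2:ℝ) - n)) := by
    unfold greenFn
    rw [abs_mul, abs_of_pos (by positivity), abs_of_nonpos (by linarith)]
    ring
  rw [habs, hexp]
  have h1 : t ^ (-(m:ℝ)) - s ^ (-(m:ℝ)) ≤ m * (s - t) / t ^ (m + 1) :=
    key_ineq' m t s ht hts
  have htn : t ^ (m + 1) * t = t ^ n := by
    rw [← pow_succ, show m + 1 + 1 = n by omega]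
  have h2' : (s - t) * t ≤ 2 * (lastCoord x * lastCoord y) := by nlinarith
  have hm0 : (0:ℝ) ≤ (m:ℝ) := by positivity
  have h4 : (m:ℝ) * (s - t) / t ^ (m+1)
      ≤ (m:ℝ) * (2 * (lastCoord x * lastCoord y)) / t ^ n := by
    rw [div_le_div_iff₀ (by positivity) (by positivity), ← htn]
    nlinarith [mul_le_mul_of_nonneg_right
      (mul_le_mul_of_nonneg_left h2' hm0) (pow_pos ht (m+1)).le]
  have hn2 : ((n:ℝ) - 2) ≠ 0 := by linarith
  calc (1 / (((n:ℝ) - 2) * ω)) * (t ^ (-(m:ℝ)) - s ^ (-(m:ℝ)))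
      ≤ (1 / (((n:ℝ) - 2) * ω)) * ((m:ℝ) * (2 * (lastCoord x * lastCoord y)) / t ^ n) := by
        apply mul_le_mul_of_nonneg_left (le_trans h1 h4) (by positivity)
  _ = 2 / ω * (lastCoord x * lastCoord y) / t ^ n := by
        rw [hm]
        field_simp

lemma tail_small' {n : ℕ} (μ : Measure (EuclideanSpace ℝ (Fin n)))
    {f : EuclideanSpace ℝ (Fin n) → ℝ≥0∞}
    (hfin : ∫⁻ y in upperHalfSpace n, f y ∂μ ≠ ⊤) {δ : ℝ≥0∞} (hδ : 0 < δ) :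
    ∃ R : ℕ, ∫⁻ y in upperHalfSpace n ∩ {y | (R:ℝ) < ‖y‖}, f y ∂μ ≤ δ := by
  set ν := (μ.restrict (upperHalfSpace n)).withDensity f with hν
  have hνs : ∀ s : Set (EuclideanSpace ℝ (Fin n)), MeasurableSet s →
      ν s = ∫⁻ y in upperHalfSpace n ∩ s, f y ∂μ := by
    intro s hs
    rw [hν, withDensity_apply f hs, Measure.restrict_restrict hs, Set.inter_comm]
  set S : ℕ → Set (EuclideanSpace ℝ (Fin n)) := fun k => {y | (k:ℝ) < ‖y‖} with hS
  have hSm : ∀ k, MeasurableSet (S k) :=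
    fun k => measurableSet_lt measurable_const measurable_norm
  have hanti : Antitone S := by
    intro k l hkl y hy
    simp only [hS, Set.mem_setOf_eq] at *
    exact lt_of_le_of_lt (by exact_mod_cast hkl) hy
  have hinter : ⋂ k, S k = ∅ := by
    ext y
    simp only [Set.mem_iInter, Set.mem_empty_iff_false, iff_false, not_forall, hS,
      Set.mem_setOf_eq, not_lt]
    obtain ⟨k, hk⟩ := exists_nat_ge ‖y‖
    exact ⟨k, by simpa using hk⟩
  have hfin' : ∃ k, ν (S k) ≠ ⊤ := by
    refine ⟨0, ?_⟩
    rw [hνs _ (hSm 0)]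
    exact ne_top_of_le_ne_top hfin (lintegral_mono_set Set.inter_subset_left)
  have htend : Tendsto (ν ∘ S) atTop (nhds 0) := by
    have := tendsto_measure_iInter_atTop (fun k => (hSm k).nullMeasurableSet) hanti hfin'
    rwa [hinter, measure_empty] at this
  obtain ⟨R, hR⟩ := (htend.eventually_lt_const hδ).exists
  exact ⟨R, by rw [← hνs _ (hSm R)]; exact hR.le⟩

set_option maxHeartbeats 1600000 in
/-- Estimate for `h₁(x) = ∫_{1<|y|≤|x|/2} G(x,y) dμ(y)`:
`h₁(x) = o(x_n |x|^{γ/p+(n-1)/q-n})` as `|x| → ∞`, `x ∈ H`. -/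
theorem stmt14 (n : ℕ) (hn : 3 ≤ n) (p q γ : ℝ) (hp : 1 < p)
    (hpq : 1 / p + 1 / q = 1) (hγ : -((n : ℝ) - 1) * (p - 1) < γ)
    (μ : Measure (EuclideanSpace ℝ (Fin n)))
    (hμ1 : ∫⁻ y in upperHalfSpace n,
        ENNReal.ofReal (lastCoord y ^ p / (1 + ‖y‖) ^ γ) ∂μ < ⊤)
    (hμ2 : ∫⁻ y in upperHalfSpace n,
        ENNReal.ofReal (1 / (1 + ‖y‖) ^ ((n : ℝ) - 1)) ∂μ < ⊤) :
    (fun x : EuclideanSpace ℝ (Fin n) =>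
        ∫ y in {y ∈ upperHalfSpace n | 1 < ‖y‖ ∧ ‖y‖ ≤ ‖x‖ / 2}, greenFn n x y ∂μ)
      =o[comap (fun x => ‖x‖) atTop ⊓ 𝓟 (upperHalfSpace n)]
      fun x => lastCoord x * ‖x‖ ^ (γ / p + ((n : ℝ) - 1) / q - n) := by
  have hn0 : 0 < n := by omega
  have hn3 : (3:ℝ) ≤ (n:ℝ) := by exact_mod_cast hn
  have hp0 : 0 < p := lt_trans one_pos hp
  have h1plt : 1/p < 1 := by rw [div_lt_one hp0]; exact hp
  have h1ppos : 0 < 1/p := by positivity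
  have hq0 : 0 < q := by
    by_contra h
    push_neg at h
    have h1 : 1/q ≤ 0 := one_div_nonpos.2 h
    linarith
  have hq1 : 1 < q := by
    have : 1/q < 1 := by linarith
    rwa [div_lt_one hq0] at this
  have hpq' : Real.HolderConjugate p q := ⟨by rw [inv_one, ← one_div, ← one_div]; exact hpq, hp0, hq0⟩
  have hkey : q + p = p * q := by field_simp at hpq; linarith
  set v := γ / p + ((n:ℝ) - 1) / q with hvdef
  have hv : 0 < v := by
    rw [hvdef, div_add_div _ _ hp0.ne' hq0.ne']
    apply div_pos _ (by positivity)
    nlinarith [mul_lt_mul_of_pos_right hγ hq0]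
  have hqv : q * v = γ * q / p + ((n:ℝ) - 1) := by
    rw [hvdef]; field_simp
  have hqvpos : 0 < q * v := by positivity
  have hω : 0 < surfaceArea n := surfaceArea_pos' hn0
  set C₀ : ℝ := 2^(n+1) / surfaceArea n with hC₀def
  have hC₀ : 0 < C₀ := by positivity
  rw [isLittleO_iff]
  intro ε hε
  set ε₂ : ℝ := ε / C₀ with hε₂def
  have hε₂ : 0 < ε₂ := by positivity
  set ε₃ : ℝ := ε₂ / 3 with hε₃def
  have hε₃ : 0 < ε₃ := by positivity
  set B : ℝ≥0∞ := ∫⁻ y in upperHalfSpace n,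
      ENNReal.ofReal (1 / (1 + ‖y‖) ^ ((n:ℝ) - 1)) ∂μ with hBdef
  have hBfin : B ≠ ⊤ := hμ2.ne
  have hBT : 0 ≤ B.toReal := ENNReal.toReal_nonneg
  -- choose θ
  set θ : ℝ := max 1 ((3 * (B.toReal + 1) / (q * ε₂)) ^ (1/q)) with hθdef
  have hθ1 : 1 ≤ θ := le_max_left _ _
  have hθ0 : 0 < θ := lt_of_lt_of_le one_pos hθ1
  have hθq : 0 < θ ^ q := Real.rpow_pos_of_pos hθ0 q
  have hθp : 0 < θ ^ p := Real.rpow_pos_of_pos hθ0 p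
  have hθbound : θ⁻¹ ^ q * B.toReal / q ≤ ε₃ := by
    have hD : 0 < 3 * (B.toReal + 1) / (q * ε₂) := by positivity
    have h0 : ((3 * (B.toReal + 1) / (q * ε₂)) ^ (1/q)) ^ q
        = 3 * (B.toReal + 1) / (q * ε₂) := by
      rw [← Real.rpow_mul hD.le, one_div_mul_cancel hq0.ne', Real.rpow_one]
    have h1 : 3 * (B.toReal + 1) / (q * ε₂) ≤ θ ^ q := by
      rw [← h0]
      exact Real.rpow_le_rpow (Real.rpow_nonneg hD.le _) (le_max_right _ _) hq0.le
    have h1' : 3 * (B.toReal + 1) ≤ q * ε₂ * θ ^ q := by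
      rw [div_le_iff₀ (by positivity)] at h1; linarith
    rw [Real.inv_rpow hθ0.le, div_le_iff₀ hq0, inv_mul_le_iff₀ hθq]
    rw [hε₃def]
    nlinarith
  -- choose R
  have hfAm : Measurable fun y : EuclideanSpace ℝ (Fin n) =>
      ENNReal.ofReal ((lastCoord y) ^ p / (1 + ‖y‖) ^ γ) :=
    ENNReal.measurable_ofReal.comp
      (((lastCoord_measurable' n).pow measurable_const).div
        ((measurable_const.add measurable_norm).pow measurable_const))
  have hδR : (0:ℝ≥0∞) < ENNReal.ofReal (ε₃ * (p / θ^p)) :=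
    ENNReal.ofReal_pos.2 (by positivity)
  obtain ⟨R, hR⟩ := tail_small' μ hμ1.ne hδR
  -- choose M
  set D₁ : ℝ := ((R:ℝ) * (1+(R:ℝ))^((n:ℝ)-1) * B.toReal + 1) / ε₃ with hD₁def
  set M : ℝ := max 2 ((max 1 D₁) ^ (1/v)) with hMdef
  have hM2 : 2 ≤ M := le_max_left _ _
  rw [eventually_inf_principal]
  filter_upwards [preimage_mem_comap (Ici_mem_atTop M)] with x hxM' hxH
  have hxM : M ≤ ‖x‖ := hxM'
  have hX2 : 2 ≤ ‖x‖ := le_trans hM2 hxM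
  have hX0 : 0 < ‖x‖ := by linarith
  have hxn : 0 < lastCoord x := hxH
  set X := ‖x‖ with hXdef
  have hXv0 : 0 < X ^ v := Real.rpow_pos_of_pos hX0 v
  set S := {y ∈ upperHalfSpace n | 1 < ‖y‖ ∧ ‖y‖ ≤ X / 2} with hSdef
  have hSm : MeasurableSet S := by
    have hSeq : S = upperHalfSpace n ∩ ({y | 1 < ‖y‖} ∩ {y | ‖y‖ ≤ X/2}) := by
      ext y
      simp only [hSdef, Set.mem_sep_iff, Set.mem_inter_iff, Set.mem_setOf_eq, and_assoc]
    rw [hSeq]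
    exact (upperHalfSpace_measurable' n).inter
      ((measurableSet_lt measurable_const measurable_norm).inter
        (measurableSet_le measurable_norm measurable_const))
  -- pointwise Green bound on S
  have hpt1 : ∀ y ∈ S, ENNReal.ofReal ‖greenFn n x y‖
      ≤ ENNReal.ofReal (C₀ * lastCoord x / X ^ n) * ENNReal.ofReal (lastCoord y) := by
    intro y hy
    obtain ⟨hyH, hy1, hy2⟩ := hy
    have hyn : 0 < lastCoord y := hyH
    have hty : X / 2 ≤ ‖x - y‖ := by
      have := norm_sub_norm_le x y
      linarith [this]
    have ht0 : 0 < ‖x - y‖ := lt_of_lt_of_le (by linarith) hty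
    have hG := green_bound' hn x y hxn hyn ht0
    have htpow : (X/2)^n ≤ ‖x-y‖^n := pow_le_pow_left₀ (by positivity) hty n
    have h3 : 2 / surfaceArea n * (lastCoord x * lastCoord y) / ‖x - y‖ ^ n
        ≤ 2 / surfaceArea n * (lastCoord x * lastCoord y) / (X/2) ^ n := by
      gcongr
    have h4 : 2 / surfaceArea n * (lastCoord x * lastCoord y) / (X/2) ^ n
        = (C₀ * lastCoord x / X ^ n) * lastCoord y := by
      rw [hC₀def, div_pow]
      field_simp
      ring
    rw [← ENNReal.ofReal_mul (by positivity)]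
    apply ENNReal.ofReal_le_ofReal
    rw [Real.norm_eq_abs]
    calc |greenFn n x y| ≤ _ := hG
      _ ≤ _ := h3
      _ = _ := h4
  have step1 : ∫⁻ y in S, ENNReal.ofReal ‖greenFn n x y‖ ∂μ
      ≤ ENNReal.ofReal (C₀ * lastCoord x / X ^ n)
        * ∫⁻ y in S, ENNReal.ofReal (lastCoord y) ∂μ := by
    rw [← lintegral_const_mul' _ _ ENNReal.ofReal_ne_top]
    exact lintegral_mono_ae (ae_restrict_of_forall_mem hSm hpt1)
  -- splitting
  set T₁ := upperHalfSpace n ∩ {y | ‖y‖ ≤ (R:ℝ)} with hT₁def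
  set T₂ := upperHalfSpace n ∩ {y | (R:ℝ) < ‖y‖ ∧ ‖y‖ ≤ X/2} with hT₂def
  have hT₁m : MeasurableSet T₁ := (upperHalfSpace_measurable' n).inter
    (measurableSet_le measurable_norm measurable_const)
  have hT₂m : MeasurableSet T₂ := by
    rw [hT₂def, Set.setOf_and]
    exact (upperHalfSpace_measurable' n).inter
      ((measurableSet_lt measurable_const measurable_norm).inter
        (measurableSet_le measurable_norm measurable_const))
  have hsub : S ⊆ T₁ ∪ T₂ := by
    intro y hy
    obtain ⟨hyH, hy1, hy2⟩ := hy
    rcases le_or_gt ‖y‖ (R:ℝ) with h | h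
    · exact Or.inl ⟨hyH, h⟩
    · exact Or.inr ⟨hyH, h, hy2⟩
  have hJsplit : ∫⁻ y in S, ENNReal.ofReal (lastCoord y) ∂μ
      ≤ (∫⁻ y in T₁, ENNReal.ofReal (lastCoord y) ∂μ)
        + ∫⁻ y in T₂, ENNReal.ofReal (lastCoord y) ∂μ :=
    le_trans (lintegral_mono_set hsub) (lintegral_union_le _ _ _)
  -- J₁ bound
  have hXvmax : max 1 D₁ ≤ X ^ v := by
    calc max 1 D₁ = ((max 1 D₁) ^ (1/v)) ^ v := by
          rw [← Real.rpow_mul (le_trans zero_le_one (le_max_left _ _)),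
            one_div_mul_cancel hv.ne', Real.rpow_one]
      _ ≤ M ^ v := Real.rpow_le_rpow (Real.rpow_nonneg
            (le_trans zero_le_one (le_max_left _ _)) _) (le_max_right _ _) hv.le
      _ ≤ X ^ v := Real.rpow_le_rpow (by linarith) hxM hv.le
  have hJ₁ : ∫⁻ y in T₁, ENNReal.ofReal (lastCoord y) ∂μ
      ≤ ENNReal.ofReal (ε₃ * X ^ v) := by
    have hpt : ∀ y ∈ T₁, ENNReal.ofReal (lastCoord y)
        ≤ ENNReal.ofReal ((R:ℝ) * (1+(R:ℝ))^((n:ℝ)-1))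
          * ENNReal.ofReal (1/(1+‖y‖)^((n:ℝ)-1)) := by
      rintro y ⟨hyH, hyR⟩
      have hyR' : ‖y‖ ≤ (R:ℝ) := hyR
      rw [← ENNReal.ofReal_mul (by positivity)]
      apply ENNReal.ofReal_le_ofReal
      have h1 : lastCoord y ≤ ‖y‖ := lastCoord_le_norm' y
      have ha : (0:ℝ) < (1+‖y‖)^((n:ℝ)-1) :=
        Real.rpow_pos_of_pos (by positivity) _
      have hb : (1+‖y‖)^((n:ℝ)-1) ≤ (1+(R:ℝ))^((n:ℝ)-1) :=
        Real.rpow_le_rpow (by positivity) (by linarith) (by linarith)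
      have hR0 : (0:ℝ) ≤ (R:ℝ) := Nat.cast_nonneg R
      have h2 : (1:ℝ) ≤ (1+(R:ℝ))^((n:ℝ)-1) / (1+‖y‖)^((n:ℝ)-1) := (one_le_div ha).2 hb
      calc lastCoord y ≤ (R:ℝ) := by linarith [norm_nonneg y]
        _ = (R:ℝ) * 1 := (mul_one _).symm
        _ ≤ (R:ℝ) * ((1+(R:ℝ))^((n:ℝ)-1) / (1+‖y‖)^((n:ℝ)-1)) :=
            mul_le_mul_of_nonneg_left h2 hR0
        _ = (R:ℝ) * (1+(R:ℝ))^((n:ℝ)-1) * (1/(1+‖y‖)^((n:ℝ)-1)) := by ring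
    calc ∫⁻ y in T₁, ENNReal.ofReal (lastCoord y) ∂μ
        ≤ ∫⁻ y in T₁, ENNReal.ofReal ((R:ℝ)*(1+(R:ℝ))^((n:ℝ)-1))
            * ENNReal.ofReal (1/(1+‖y‖)^((n:ℝ)-1)) ∂μ :=
          lintegral_mono_ae (ae_restrict_of_forall_mem hT₁m hpt)
      _ = ENNReal.ofReal ((R:ℝ)*(1+(R:ℝ))^((n:ℝ)-1))
            * ∫⁻ y in T₁, ENNReal.ofReal (1/(1+‖y‖)^((n:ℝ)-1)) ∂μ :=
          lintegral_const_mul' _ _ ENNReal.ofReal_ne_top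
      _ ≤ ENNReal.ofReal ((R:ℝ)*(1+(R:ℝ))^((n:ℝ)-1)) * B :=
          mul_le_mul_right (lintegral_mono_set Set.inter_subset_left) _
      _ ≤ ENNReal.ofReal (ε₃ * X ^ v) := by
          rw [← ENNReal.ofReal_toReal hBfin, ← ENNReal.ofReal_mul (by positivity)]
          apply ENNReal.ofReal_le_ofReal
          have hD₁le : D₁ ≤ X ^ v := le_trans (le_max_right 1 D₁) hXvmax
          rw [hD₁def, div_le_iff₀ hε₃] at hD₁le
          nlinarith
  -- J₂ bound
  have hpt2 : ∀ y ∈ T₂, ENNReal.ofReal (lastCoord y)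
      ≤ ENNReal.ofReal (θ^p * X^v / p)
          * ENNReal.ofReal ((lastCoord y) ^ p / (1 + ‖y‖) ^ γ)
        + ENNReal.ofReal (θ⁻¹^q * X^v / q)
          * ENNReal.ofReal (1/(1+‖y‖)^((n:ℝ)-1)) := by
    rintro y ⟨hyH, hyR, hy2⟩
    have hyn : 0 < lastCoord y := hyH
    set w := 1 + ‖y‖ with hwdef
    have hw1 : (1:ℝ) ≤ w := by
      rw [hwdef]; linarith [norm_nonneg y]
    have hw0 : (0:ℝ) < w := by linarith
    have hwX : w ≤ X := by rw [hwdef]; linarith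
    set lam := θ * X ^ (v/p) with hlamdef
    have hXvp : 0 < X ^ (v/p) := Real.rpow_pos_of_pos hX0 _
    have hlam0 : 0 < lam := by positivity
    have ha0 : 0 ≤ lam * lastCoord y * w ^ (-(γ/p)) := by positivity
    have hb0 : 0 ≤ lam⁻¹ * w ^ (γ/p) := by positivity
    have hyoung := Real.young_inequality_of_nonneg ha0 hb0 hpq'
    have hwgp : (0:ℝ) < w ^ (γ/p) := Real.rpow_pos_of_pos hw0 _
    have hab : (lam * lastCoord y * w ^ (-(γ/p))) * (lam⁻¹ * w ^ (γ/p)) = lastCoord y := by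
      rw [Real.rpow_neg hw0.le]
      field_simp
    rw [hab] at hyoung
    have hap : (lam * lastCoord y * w ^ (-(γ/p))) ^ p
        = (θ^p * X^v) * ((lastCoord y)^p / w^γ) := by
      rw [Real.mul_rpow (by positivity) (Real.rpow_nonneg hw0.le _),
          Real.mul_rpow (by positivity) hyn.le,
          hlamdef, Real.mul_rpow hθ0.le (Real.rpow_nonneg hX0.le _),
          ← Real.rpow_mul hX0.le, div_mul_cancel₀ _ hp0.ne',
          ← Real.rpow_mul hw0.le,
          show -(γ/p) * p = -γ by field_simp,
          Real.rpow_neg hw0.le γ]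
      ring
    have hbq : (lam⁻¹ * w ^ (γ/p)) ^ q ≤ θ⁻¹^q * X^v * (1 / w^((n:ℝ)-1)) := by
      have h1 : (lam⁻¹ * w ^ (γ/p)) ^ q
          = θ⁻¹^q * (X^(-(v/p)*q) * w^(γ/p*q)) := by
        rw [hlamdef, mul_inv, ← Real.rpow_neg hX0.le,
          Real.mul_rpow (by positivity) (Real.rpow_nonneg hw0.le _),
          Real.mul_rpow (by positivity) (Real.rpow_nonneg hX0.le _),
          ← Real.rpow_mul hX0.le, ← Real.rpow_mul hw0.le]
        ring
      have he : γ / p * q = q * v - ((n:ℝ) - 1) := by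
        have h2 : γ / p * q = γ * q / p := by ring
        linarith [hqv]
      have hexp2 : -(v/p)*q + q*v = v := by
        have h1p : 1 - 1/p = 1/q := by linarith
        calc -(v/p)*q + q*v = q*v*(1 - 1/p) := by ring
          _ = q*v*(1/q) := by rw [h1p]
          _ = v := by field_simp
      have h2 : X^(-(v/p)*q) * w^(γ/p*q)
          ≤ X^v * w^(-((n:ℝ)-1)) := by
        rw [he, Real.rpow_sub hw0]
        have hwq : w ^ (q*v) ≤ X ^ (q*v) :=
          Real.rpow_le_rpow hw0.le hwX hqvpos.le
        calc X^(-(v/p)*q) * (w^(q*v) / w^((n:ℝ)-1))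
            ≤ X^(-(v/p)*q) * (X^(q*v) / w^((n:ℝ)-1)) :=
              mul_le_mul_of_nonneg_left
                ((div_le_div_iff_of_pos_right (Real.rpow_pos_of_pos hw0 _)).2 hwq)
                (Real.rpow_nonneg hX0.le _)
          _ = (X^(-(v/p)*q) * X^(q*v)) * w^(-((n:ℝ)-1)) := by
              rw [Real.rpow_neg hw0.le]; ring
          _ = X^v * w^(-((n:ℝ)-1)) := by
              rw [← Real.rpow_add hX0, hexp2]
      rw [h1]
      calc θ⁻¹^q * (X^(-(v/p)*q) * w^(γ/p*q))
          ≤ θ⁻¹^q * (X^v * w^(-((n:ℝ)-1))) := by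
            apply mul_le_mul_of_nonneg_left h2 (Real.rpow_nonneg (by positivity) _)
        _ = θ⁻¹^q * X^v * (1 / w^((n:ℝ)-1)) := by
            rw [Real.rpow_neg hw0.le, one_div]; ring
    have hreal : lastCoord y ≤ (θ^p * X^v / p) * ((lastCoord y)^p / w^γ)
        + (θ⁻¹^q * X^v / q) * (1 / w^((n:ℝ)-1)) := by
      calc lastCoord y
          ≤ (lam * lastCoord y * w ^ (-(γ/p)))^p/p + (lam⁻¹ * w^(γ/p))^q/q := hyoung
        _ ≤ ((θ^p*X^v)*((lastCoord y)^p/w^γ))/p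
            + (θ⁻¹^q * X^v * (1 / w^((n:ℝ)-1)))/q := by
            rw [hap]
            gcongr
        _ = (θ^p * X^v / p) * ((lastCoord y)^p / w^γ)
            + (θ⁻¹^q * X^v / q) * (1 / w^((n:ℝ)-1)) := by ring
    have h1nn : (0:ℝ) ≤ (θ^p * X^v / p) * ((lastCoord y)^p / w^γ) :=
      mul_nonneg (by positivity)
        (div_nonneg (Real.rpow_nonneg hyn.le _) (Real.rpow_nonneg hw0.le _))
    have h2nn : (0:ℝ) ≤ (θ⁻¹^q * X^v / q) * (1 / w^((n:ℝ)-1)) := by positivity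
    calc ENNReal.ofReal (lastCoord y)
        ≤ ENNReal.ofReal ((θ^p * X^v / p) * ((lastCoord y)^p / w^γ)
            + (θ⁻¹^q * X^v / q) * (1 / w^((n:ℝ)-1))) := ENNReal.ofReal_le_ofReal hreal
      _ = ENNReal.ofReal ((θ^p * X^v / p) * ((lastCoord y)^p / w^γ))
            + ENNReal.ofReal ((θ⁻¹^q * X^v / q) * (1 / w^((n:ℝ)-1))) :=
          ENNReal.ofReal_add h1nn h2nn
      _ = ENNReal.ofReal (θ^p * X^v / p) * ENNReal.ofReal ((lastCoord y)^p / w^γ)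
            + ENNReal.ofReal (θ⁻¹^q * X^v / q) * ENNReal.ofReal (1 / w^((n:ℝ)-1)) := by
          rw [ENNReal.ofReal_mul (by positivity), ENNReal.ofReal_mul (by positivity)]
  have hJ₂ : ∫⁻ y in T₂, ENNReal.ofReal (lastCoord y) ∂μ
      ≤ ENNReal.ofReal (ε₃ * X^v) + ENNReal.ofReal (ε₃ * X^v) := by
    have hc1 : ENNReal.ofReal (θ^p * X^v / p) * ENNReal.ofReal (ε₃ * (p / θ^p))
        ≤ ENNReal.ofReal (ε₃ * X^v) := by
      rw [← ENNReal.ofReal_mul (by positivity)]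
      apply ENNReal.ofReal_le_ofReal
      rw [show θ^p * X^v / p * (ε₃ * (p / θ^p)) = ε₃ * X^v by
        field_simp]
    have hc2 : ENNReal.ofReal (θ⁻¹^q * X^v / q) * B ≤ ENNReal.ofReal (ε₃ * X^v) := by
      rw [← ENNReal.ofReal_toReal hBfin, ← ENNReal.ofReal_mul (by positivity)]
      apply ENNReal.ofReal_le_ofReal
      calc θ⁻¹^q * X^v / q * B.toReal = (θ⁻¹^q * B.toReal / q) * X^v := by ring
        _ ≤ ε₃ * X^v := mul_le_mul_of_nonneg_right hθbound hXv0.le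
    calc ∫⁻ y in T₂, ENNReal.ofReal (lastCoord y) ∂μ
        ≤ ∫⁻ y in T₂, (ENNReal.ofReal (θ^p * X^v / p)
              * ENNReal.ofReal ((lastCoord y) ^ p / (1 + ‖y‖) ^ γ)
            + ENNReal.ofReal (θ⁻¹^q * X^v / q)
              * ENNReal.ofReal (1/(1+‖y‖)^((n:ℝ)-1))) ∂μ :=
          lintegral_mono_ae (ae_restrict_of_forall_mem hT₂m hpt2)
      _ = (∫⁻ y in T₂, ENNReal.ofReal (θ^p * X^v / p)
              * ENNReal.ofReal ((lastCoord y) ^ p / (1 + ‖y‖) ^ γ) ∂μ)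
            + ∫⁻ y in T₂, ENNReal.ofReal (θ⁻¹^q * X^v / q)
              * ENNReal.ofReal (1/(1+‖y‖)^((n:ℝ)-1)) ∂μ :=
          lintegral_add_left (hfAm.const_mul _) _
      _ = ENNReal.ofReal (θ^p * X^v / p)
            * (∫⁻ y in T₂, ENNReal.ofReal ((lastCoord y) ^ p / (1 + ‖y‖) ^ γ) ∂μ)
            + ENNReal.ofReal (θ⁻¹^q * X^v / q)
            * ∫⁻ y in T₂, ENNReal.ofReal (1/(1+‖y‖)^((n:ℝ)-1)) ∂μ := by
          rw [lintegral_const_mul' _ _ ENNReal.ofReal_ne_top,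
            lintegral_const_mul' _ _ ENNReal.ofReal_ne_top]
      _ ≤ ENNReal.ofReal (θ^p * X^v / p) * ENNReal.ofReal (ε₃ * (p / θ^p))
            + ENNReal.ofReal (θ⁻¹^q * X^v / q) * B := by
          gcongr
          · calc ∫⁻ y in T₂, ENNReal.ofReal ((lastCoord y) ^ p / (1 + ‖y‖) ^ γ) ∂μ
                ≤ ∫⁻ y in upperHalfSpace n ∩ {y | (R:ℝ) < ‖y‖},
                    ENNReal.ofReal ((lastCoord y) ^ p / (1 + ‖y‖) ^ γ) ∂μ :=
                  lintegral_mono_set (fun y hy => ⟨hy.1, hy.2.1⟩)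
              _ ≤ _ := hR
          · exact lintegral_mono_set Set.inter_subset_left
      _ ≤ ENNReal.ofReal (ε₃ * X^v) + ENNReal.ofReal (ε₃ * X^v) := add_le_add hc1 hc2
  have hJ : ∫⁻ y in S, ENNReal.ofReal (lastCoord y) ∂μ ≤ ENNReal.ofReal (ε₂ * X^v) := by
    calc ∫⁻ y in S, ENNReal.ofReal (lastCoord y) ∂μ
        ≤ (∫⁻ y in T₁, ENNReal.ofReal (lastCoord y) ∂μ)
          + ∫⁻ y in T₂, ENNReal.ofReal (lastCoord y) ∂μ := hJsplit
      _ ≤ ENNReal.ofReal (ε₃ * X^v)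
          + (ENNReal.ofReal (ε₃ * X^v) + ENNReal.ofReal (ε₃ * X^v)) := add_le_add hJ₁ hJ₂
      _ = ENNReal.ofReal (ε₃ * X^v + (ε₃ * X^v + ε₃ * X^v)) := by
          rw [← ENNReal.ofReal_add (by positivity) (by positivity),
            ← ENNReal.ofReal_add (by positivity) (by positivity)]
      _ = ENNReal.ofReal (ε₂ * X^v) := by
          congr 1
          rw [hε₃def]
          ring
  have key : ∫⁻ y in S, ENNReal.ofReal ‖greenFn n x y‖ ∂μ
      ≤ ENNReal.ofReal (ε * (lastCoord x * X ^ (v - (n:ℝ)))) := by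
    calc ∫⁻ y in S, ENNReal.ofReal ‖greenFn n x y‖ ∂μ
        ≤ ENNReal.ofReal (C₀ * lastCoord x / X ^ n)
            * ∫⁻ y in S, ENNReal.ofReal (lastCoord y) ∂μ := step1
      _ ≤ ENNReal.ofReal (C₀ * lastCoord x / X ^ n) * ENNReal.ofReal (ε₂ * X^v) :=
          mul_le_mul_right hJ _
      _ = ENNReal.ofReal ((C₀ * lastCoord x / X ^ n) * (ε₂ * X^v)) :=
          (ENNReal.ofReal_mul (by positivity)).symm
      _ = ENNReal.ofReal (ε * (lastCoord x * X ^ (v - (n:ℝ)))) := by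
          congr 1
          rw [Real.rpow_sub hX0, Real.rpow_natCast, hε₂def]
          field_simp
  calc ‖∫ y in S, greenFn n x y ∂μ‖
      ≤ (∫⁻ y in S, ENNReal.ofReal ‖greenFn n x y‖ ∂μ).toReal :=
        norm_integral_le_lintegral_norm _
    _ ≤ ε * (lastCoord x * X ^ (v - (n:ℝ))) :=
        ENNReal.toReal_le_of_le_ofReal
          (mul_nonneg hε.le (mul_nonneg hxn.le (Real.rpow_nonneg hX0.le _))) key
    _ = ε * ‖lastCoord x * X ^ (v - (n:ℝ))‖ := by
        rw [Real.norm_eq_abs, abs_of_nonneg (mul_nonneg hxn.le (Real.rpow_nonneg hX0.le _))]
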